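/- (Desargues' involution theorem for the complete quadrangle.) Let B, C, D, E be a complete quadrangle in ℝ². Let Δ be a line that is not parallel to any of the six side lines BC, DE, BE, CD, BD, CE and does not pass through any point of pairwise intersection of these six lines (in particular not through B, C, D, E). Let I = Δ∩BC, K = Δ∩DE, P = Δ∩BE, Q = Δ∩CD, G = Δ∩BD, H = Δ∩CE. Then QI·QK·PG·PH = PI·PK·QG·QH; that is, the three couples (I,K), (P,Q), (G,H) are in involution on Δ. -/

import Mathlib

noncomputable section

open EuclideanGeometry

abbrev Pt : Type := EuclideanSpace ℝ (Fin 2)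

/-- The affine line through two points of the Euclidean plane. -/
def lineThrough (x y : Pt) : AffineSubspace ℝ Pt := affineSpan ℝ {x, y}

/-- A subset of the plane is a line if it is the affine span of two distinct points. -/
def IsLine (s : AffineSubspace ℝ Pt) : Prop := ∃ x y : Pt, x ≠ y ∧ s = lineThrough x y

/-- The six side lines of a complete quadrangle B, C, D, E. -/
def sides (B C D E : Pt) : Set (AffineSubspace ℝ Pt) :=
  {lineThrough B C, lineThrough D E, lineThrough B E,
   lineThrough C D, lineThrough B D, lineThrough C E}

/- ### Auxiliary lemmas -/

lemma pt_ext' {v w : Pt} (h0 : v 0 = w 0) (h1 : v 1 = w 1) : v = w := by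
  ext i
  fin_cases i
  · exact h0
  · exact h1

lemma vec_ne_zero_coord' {v : Pt} (hv : v ≠ 0) : v 0 ≠ 0 ∨ v 1 ≠ 0 := by
  by_contra hc
  push_neg at hc
  exact hv (pt_ext' (by simp [hc.1]) (by simp [hc.2]))

lemma smul_comp' (r : ℝ) (v : Pt) (i : Fin 2) : (r • v) i = r * v i := rfl

lemma span_eq_of_det' {v w : Pt} (hv : v ≠ 0) (hw : w ≠ 0)
    (h : v 0 * w 1 - v 1 * w 0 = 0) : (ℝ ∙ v : Submodule ℝ Pt) = ℝ ∙ w := by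
  obtain ⟨r, hr, hwv⟩ : ∃ r : ℝ, r ≠ 0 ∧ w = r • v := by
    rcases vec_ne_zero_coord' hv with h0 | h1
    · refine ⟨w 0 / v 0, ?_, ?_⟩
      · intro hz
        have hw0 : w 0 = 0 := by
          rcases div_eq_zero_iff.mp hz with h' | h'
          · exact h'
          · exact absurd h' h0
        have hw1 : w 1 = 0 := by
          have h2 : v 0 * w 1 = 0 := by linear_combination h + v 1 * hw0
          rcases mul_eq_zero.mp h2 with h' | h'
          · exact absurd h' h0
          · exact h'
        exact hw (pt_ext' (by simp [hw0]) (by simp [hw1]))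
      · refine pt_ext' ?_ ?_ <;> rw [smul_comp']
        · field_simp
        · rw [div_mul_eq_mul_div, eq_div_iff h0]; linear_combination h
    · refine ⟨w 1 / v 1, ?_, ?_⟩
      · intro hz
        have hw1 : w 1 = 0 := by
          rcases div_eq_zero_iff.mp hz with h' | h'
          · exact h'
          · exact absurd h' h1
        have hw0 : w 0 = 0 := by
          have h2 : v 1 * w 0 = 0 := by linear_combination -h + v 0 * hw1
          rcases mul_eq_zero.mp h2 with h' | h'
          · exact absurd h' h1
          · exact h'
        exact hw (pt_ext' (by simp [hw0]) (by simp [hw1]))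
      · refine pt_ext' ?_ ?_ <;> rw [smul_comp']
        · rw [div_mul_eq_mul_div, eq_div_iff h1]; linear_combination -h
        · field_simp
  rw [hwv]
  exact (Submodule.span_singleton_smul_eq (IsUnit.mk0 r hr) v).symm

lemma not_den_zero' (x y U V : Pt) (hxy : x ≠ y) (hUV : U ≠ V)
    (hnp : ¬ AffineSubspace.Parallel (lineThrough x y) (lineThrough U V)) :
    (y 0 - x 0) * (V 1 - U 1) - (y 1 - x 1) * (V 0 - U 0) ≠ 0 := by
  intro h
  apply hnp
  rw [lineThrough, lineThrough, AffineSubspace.affineSpan_pair_parallel_iff_vectorSpan_eq,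
    vectorSpan_pair, vectorSpan_pair]
  have h' : (x - y) 0 * (U - V) 1 - (x - y) 1 * (U - V) 0 = 0 := by
    show (x 0 - y 0) * (U 1 - V 1) - (x 1 - y 1) * (U 0 - V 0) = 0
    linear_combination h
  have := span_eq_of_det' (v := x - y) (w := U - V)
    (sub_ne_zero.mpr hxy) (sub_ne_zero.mpr hUV) h'
  simpa [vsub_eq_sub] using this

lemma ne₁₂' {X Y Z : Pt} (h : ¬ Collinear ℝ ({X, Y, Z} : Set Pt)) : X ≠ Y := by
  rintro rfl
  exact h ((collinear_pair ℝ X Z).subset (by intro z hz; simp at hz ⊢; tauto))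

lemma ne₁₃' {X Y Z : Pt} (h : ¬ Collinear ℝ ({X, Y, Z} : Set Pt)) : X ≠ Z := by
  rintro rfl
  exact h ((collinear_pair ℝ X Y).subset (by intro z hz; simp at hz ⊢; tauto))

lemma ne₂₃' {X Y Z : Pt} (h : ¬ Collinear ℝ ({X, Y, Z} : Set Pt)) : Y ≠ Z := by
  rintro rfl
  exact h ((collinear_pair ℝ X Y).subset (by intro z hz; simp at hz ⊢; tauto))

lemma mem_line_param' (x y Z : Pt) (h : Z ∈ lineThrough x y) :
    ∃ t : ℝ, ∀ i, Z i = t * (y i - x i) + x i := by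
  obtain ⟨t, ht⟩ := vadd_left_mem_affineSpan_pair.1
    (show (Z -ᵥ x) +ᵥ x ∈ affineSpan ℝ {x, y} by rw [vsub_vadd]; exact h)
  refine ⟨t, fun i => ?_⟩
  have := congrArg (fun v : Pt => v i) ht
  simp only [vsub_eq_sub, PiLp.smul_apply, PiLp.sub_apply, smul_eq_mul] at this
  linarith

lemma side_param' (x y U V Z : Pt) (t : ℝ)
    (hp : ∀ i, Z i = t * (y i - x i) + x i)
    (h : Z ∈ lineThrough U V) :
    (t * (y 0 - x 0) - (U 0 - x 0)) * (V 1 - U 1)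
      = (t * (y 1 - x 1) - (U 1 - x 1)) * (V 0 - U 0) := by
  obtain ⟨s, hs⟩ := vadd_left_mem_affineSpan_pair.1
    (show (Z -ᵥ U) +ᵥ U ∈ affineSpan ℝ {U, V} by rw [vsub_vadd]; exact h)
  have h0 := congrArg (fun v : Pt => v 0) hs
  have h1 := congrArg (fun v : Pt => v 1) hs
  simp only [vsub_eq_sub, PiLp.smul_apply, PiLp.sub_apply, smul_eq_mul] at h0 h1
  have p0 := hp 0
  have p1 := hp 1
  linear_combination (-(V 1 - U 1)) * h0 + (V 0 - U 0) * h1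
    - (V 1 - U 1) * p0 + (V 0 - U 0) * p1

lemma dist_param' (x y Z W : Pt) (tZ tW : ℝ)
    (hZ : ∀ i, Z i = tZ * (y i - x i) + x i) (hW : ∀ i, W i = tW * (y i - x i) + x i) :
    dist Z W = |tZ - tW| * dist y x := by
  rw [EuclideanSpace.dist_eq, EuclideanSpace.dist_eq]
  simp only [Real.dist_eq, sq_abs, Fin.sum_univ_two]
  rw [hZ 0, hW 0, hZ 1, hW 1]
  rw [show (tZ * (y 0 - x 0) + x 0 - (tW * (y 0 - x 0) + x 0)) ^ 2
        + (tZ * (y 1 - x 1) + x 1 - (tW * (y 1 - x 1) + x 1)) ^ 2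
      = (tZ - tW) ^ 2 * ((y 0 - x 0) ^ 2 + (y 1 - x 1) ^ 2) from by ring]
  rw [Real.sqrt_mul (sq_nonneg _), Real.sqrt_sq_eq_abs]

set_option maxHeartbeats 4000000 in
lemma key_special' (s b0 b1 c0 c1 d0 d1 e0 e1 tI tK tP tQ tG tH : ℝ)
    (hI : (-b0) * (c1 - b1) = (tI * s - b1) * (c0 - b0))
    (hK : (-d0) * (e1 - d1) = (tK * s - d1) * (e0 - d0))
    (hP : (-b0) * (e1 - b1) = (tP * s - b1) * (e0 - b0))
    (hQ : (-c0) * (d1 - c1) = (tQ * s - c1) * (d0 - c0))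
    (hG : (-b0) * (d1 - b1) = (tG * s - b1) * (d0 - b0))
    (hH : (-c0) * (e1 - c1) = (tH * s - c1) * (e0 - c0))
    (dI : s * (c0 - b0) ≠ 0) (dK : s * (e0 - d0) ≠ 0) (dP : s * (e0 - b0) ≠ 0)
    (dQ : s * (d0 - c0) ≠ 0) (dG : s * (d0 - b0) ≠ 0) (dH : s * (e0 - c0) ≠ 0) :
    (tQ - tI) * (tQ - tK) * (tP - tG) * (tP - tH)
      = (tP - tI) * (tP - tK) * (tQ - tG) * (tQ - tH) := by
  have eI : tI = (b1 * c0 - b0 * c1) / (s * (c0 - b0)) := by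
    rw [eq_div_iff dI]; linear_combination -hI
  have eK : tK = (d1 * e0 - d0 * e1) / (s * (e0 - d0)) := by
    rw [eq_div_iff dK]; linear_combination -hK
  have eP : tP = (b1 * e0 - b0 * e1) / (s * (e0 - b0)) := by
    rw [eq_div_iff dP]; linear_combination -hP
  have eQ : tQ = (c1 * d0 - c0 * d1) / (s * (d0 - c0)) := by
    rw [eq_div_iff dQ]; linear_combination -hQ
  have eG : tG = (b1 * d0 - b0 * d1) / (s * (d0 - b0)) := by
    rw [eq_div_iff dG]; linear_combination -hG
  have eH : tH = (c1 * e0 - c0 * e1) / (s * (e0 - c0)) := by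
    rw [eq_div_iff dH]; linear_combination -hH
  rw [eI, eK, eP, eQ, eG, eH]
  rw [div_sub_div _ _ dQ dI, div_sub_div _ _ dQ dK, div_sub_div _ _ dP dG,
      div_sub_div _ _ dP dH, div_sub_div _ _ dP dI, div_sub_div _ _ dP dK,
      div_sub_div _ _ dQ dG, div_sub_div _ _ dQ dH]
  rw [div_mul_div_comm, div_mul_div_comm, div_mul_div_comm, div_mul_div_comm,
      div_mul_div_comm, div_mul_div_comm]
  congr 1
  · ring
  · ring

set_option maxHeartbeats 4000000 in
/-- Desargues'"'"' involution theorem for the complete quadrangle. -/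
theorem desargues_involution_quadrangle
    (B C D E : Pt)
    (hBCD : ¬ Collinear ℝ ({B, C, D} : Set Pt))
    (hBCE : ¬ Collinear ℝ ({B, C, E} : Set Pt))
    (hBDE : ¬ Collinear ℝ ({B, D, E} : Set Pt))
    (hCDE : ¬ Collinear ℝ ({C, D, E} : Set Pt))
    (Δ : AffineSubspace ℝ Pt) (hΔ : IsLine Δ)
    (hnpar : ∀ s ∈ sides B C D E, ¬ AffineSubspace.Parallel Δ s)
    (havoid : ∀ s₁ ∈ sides B C D E, ∀ s₂ ∈ sides B C D E, s₁ ≠ s₂ →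
      ∀ X : Pt, X ∈ s₁ → X ∈ s₂ → X ∉ Δ)
    (I K P Q G H : Pt)
    (hI : I ∈ Δ ∧ I ∈ lineThrough B C)
    (hK : K ∈ Δ ∧ K ∈ lineThrough D E)
    (hP : P ∈ Δ ∧ P ∈ lineThrough B E)
    (hQ : Q ∈ Δ ∧ Q ∈ lineThrough C D)
    (hG : G ∈ Δ ∧ G ∈ lineThrough B D)
    (hH : H ∈ Δ ∧ H ∈ lineThrough C E) :
    dist Q I * dist Q K * dist P G * dist P H
      = dist P I * dist P K * dist Q G * dist Q H := by
  obtain ⟨x, y, hxy, rfl⟩ := hΔ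
  -- distinctness of the vertices
  have hBC : B ≠ C := ne₁₂' hBCD
  have hDE : D ≠ E := ne₂₃' hBDE
  have hBE : B ≠ E := ne₁₃' hBDE
  have hCD : C ≠ D := ne₂₃' hBCD
  have hBD : B ≠ D := ne₁₃' hBCD
  have hCE : C ≠ E := ne₂₃' hBCE
  -- the six denominators are nonzero
  have dI := not_den_zero' x y B C hxy hBC (hnpar _ (by simp [sides]))
  have dK := not_den_zero' x y D E hxy hDE (hnpar _ (by simp [sides]))
  have dP := not_den_zero' x y B E hxy hBE (hnpar _ (by simp [sides]))
  have dQ := not_den_zero' x y C D hxy hCD (hnpar _ (by simp [sides]))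
  have dG := not_den_zero' x y B D hxy hBD (hnpar _ (by simp [sides]))
  have dH := not_den_zero' x y C E hxy hCE (hnpar _ (by simp [sides]))
  -- parameters of the six points on Δ
  obtain ⟨tI, hpI⟩ := mem_line_param' x y I hI.1
  obtain ⟨tK, hpK⟩ := mem_line_param' x y K hK.1
  obtain ⟨tP, hpP⟩ := mem_line_param' x y P hP.1
  obtain ⟨tQ, hpQ⟩ := mem_line_param' x y Q hQ.1
  obtain ⟨tG, hpG⟩ := mem_line_param' x y G hG.1
  obtain ⟨tH, hpH⟩ := mem_line_param' x y H hH.1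
  -- the six incidence equations
  have sI := side_param' x y B C I tI hpI hI.2
  have sK := side_param' x y D E K tK hpK hK.2
  have sP := side_param' x y B E P tP hpP hP.2
  have sQ := side_param' x y C D Q tQ hpQ hQ.2
  have sG := side_param' x y B D G tG hpG hG.2
  have sH := side_param' x y C E H tH hpH hH.2
  -- shorthand
  set u0 : ℝ := y 0 - x 0 with hu0
  set u1 : ℝ := y 1 - x 1 with hu1
  have hs : u0 ^ 2 + u1 ^ 2 ≠ 0 := by
    have hvne : (y - x : Pt) ≠ 0 := sub_ne_zero.mpr (Ne.symm hxy)
    have h01 := vec_ne_zero_coord' hvne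
    have e0 : (y - x : Pt) 0 = u0 := rfl
    have e1 : (y - x : Pt) 1 = u1 := rfl
    rw [e0, e1] at h01
    intro h
    rcases h01 with h' | h'
    · exact h' (by nlinarith [sq_nonneg u0, sq_nonneg u1])
    · exact h' (by nlinarith [sq_nonneg u0, sq_nonneg u1])
  -- transformed coordinates (rotate so that the direction of Δ is vertical)
  have hsign := key_special' (u0 ^ 2 + u1 ^ 2)
      (u0 * (B 1 - x 1) - u1 * (B 0 - x 0)) (u0 * (B 0 - x 0) + u1 * (B 1 - x 1))
      (u0 * (C 1 - x 1) - u1 * (C 0 - x 0)) (u0 * (C 0 - x 0) + u1 * (C 1 - x 1))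
      (u0 * (D 1 - x 1) - u1 * (D 0 - x 0)) (u0 * (D 0 - x 0) + u1 * (D 1 - x 1))
      (u0 * (E 1 - x 1) - u1 * (E 0 - x 0)) (u0 * (E 0 - x 0) + u1 * (E 1 - x 1))
      tI tK tP tQ tG tH
      (by linear_combination (-(u0 ^ 2 + u1 ^ 2)) * sI)
      (by linear_combination (-(u0 ^ 2 + u1 ^ 2)) * sK)
      (by linear_combination (-(u0 ^ 2 + u1 ^ 2)) * sP)
      (by linear_combination (-(u0 ^ 2 + u1 ^ 2)) * sQ)
      (by linear_combination (-(u0 ^ 2 + u1 ^ 2)) * sG)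
      (by linear_combination (-(u0 ^ 2 + u1 ^ 2)) * sH)
      (by intro h
          rcases mul_eq_zero.mp h with h' | h'
          · exact hs h'
          · exact dI (by linear_combination h'))
      (by intro h
          rcases mul_eq_zero.mp h with h' | h'
          · exact hs h'
          · exact dK (by linear_combination h'))
      (by intro h
          rcases mul_eq_zero.mp h with h' | h'
          · exact hs h'
          · exact dP (by linear_combination h'))
      (by intro h
          rcases mul_eq_zero.mp h with h' | h'
          · exact hs h'
          · exact dQ (by linear_combination h'))
      (by intro h
          rcases mul_eq_zero.mp h with h' | h'
          · exact hs h'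
          · exact dG (by linear_combination h'))
      (by intro h
          rcases mul_eq_zero.mp h with h' | h'
          · exact hs h'
          · exact dH (by linear_combination h'))
  -- rewrite the distances
  rw [dist_param' x y Q I tQ tI hpQ hpI, dist_param' x y Q K tQ tK hpQ hpK,
      dist_param' x y P G tP tG hpP hpG, dist_param' x y P H tP tH hpP hpH,
      dist_param' x y P I tP tI hpP hpI, dist_param' x y P K tP tK hpP hpK,
      dist_param' x y Q G tQ tG hpQ hpG, dist_param' x y Q H tQ tH hpQ hpH]
  have habs : |tQ - tI| * |tQ - tK| * |tP - tG| * |tP - tH|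
      = |tP - tI| * |tP - tK| * |tQ - tG| * |tQ - tH| := by
    rw [← abs_mul, ← abs_mul, ← abs_mul, ← abs_mul, ← abs_mul, ← abs_mul, hsign]
  linear_combination (dist y x) ^ 4 * habs
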